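/- arXiv:1909.02332 — 7 statements merged into one kernel-verified Lean document; each statement's English description precedes it below -/
import Mathlib

section
/- Let S = {(a₁,a₂,b₁,b₂,c₁,c₂) ∈ ℤ⁶ : gcd(a₁,a₂) = gcd(b₁,b₂) = gcd(c₁,c₂) = 1} and define Δ(a₁,a₂,b₁,b₂,c₁,c₂) = (b₁c₁+b₁c₂+b₂c₂, a₁c₁+a₂c₁+a₂c₂, a₁b₁+a₁b₂+a₂b₂). For t ∈ ℤ define Γ_t(a₁,a₂,b₁,b₂,c₁,c₂) = (a₁t − a₂, a₁(1−t) + a₂, −b₂, b₁ + b₂(t+1), c₁t + c₂(t−1), c₁ + c₂). Then for every x ∈ S and every t ∈ ℤ, Γ_t(x) ∈ S and Δ(x) = Δ(Γ_t(x)). -/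
/-- The map Δ on coprime tuples. -/
def Delta (a₁ a₂ b₁ b₂ c₁ c₂ : ℤ) : ℤ × ℤ × ℤ :=
  (b₁*c₁ + b₁*c₂ + b₂*c₂, a₁*c₁ + a₂*c₁ + a₂*c₂, a₁*b₁ + a₁*b₂ + a₂*b₂)

/-- Γ_t preserves membership in S and the value of Δ. -/
theorem stmt_4 (a₁ a₂ b₁ b₂ c₁ c₂ t : ℤ)
    (ha : Int.gcd a₁ a₂ = 1) (hb : Int.gcd b₁ b₂ = 1) (hc : Int.gcd c₁ c₂ = 1) :
    Int.gcd (a₁*t - a₂) (a₁*(1-t) + a₂) = 1 ∧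
    Int.gcd (-b₂) (b₁ + b₂*(t+1)) = 1 ∧
    Int.gcd (c₁*t + c₂*(t-1)) (c₁ + c₂) = 1 ∧
    Delta (a₁*t - a₂) (a₁*(1-t) + a₂) (-b₂) (b₁ + b₂*(t+1))
        (c₁*t + c₂*(t-1)) (c₁ + c₂) = Delta a₁ a₂ b₁ b₂ c₁ c₂ := by
  rw [← Int.isCoprime_iff_gcd_eq_one] at ha hb hc
  obtain ⟨x, y, hxy⟩ := ha
  obtain ⟨u, v, huv⟩ := hb
  obtain ⟨p, q, hpq⟩ := hc
  refine ⟨?_, ?_, ?_, ?_⟩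
  · rw [← Int.isCoprime_iff_gcd_eq_one]
    exact ⟨x + y*(t-1), x + y*t, by linear_combination hxy⟩
  · rw [← Int.isCoprime_iff_gcd_eq_one]
    exact ⟨u*(t+1) - v, u, by linear_combination huv⟩
  · rw [← Int.isCoprime_iff_gcd_eq_one]
    exact ⟨p - q, p*(1-t) + q*t, by linear_combination hpq⟩
  · simp only [Delta, Prod.mk.injEq]
    refine ⟨by ring, by ring, by ring⟩
end

section
/- Let a, b, c be positive integers with gcd(a,b) = gcd(b,c) = gcd(a,c), and suppose that either all three 2-adic valuations ν₂(a), ν₂(b), ν₂(c) are zero, or they are not all equal. Then there exist integers a₁, b₂ such that a₁·a + b·b₂ = c and gcd(a₁, b) = 1 and gcd(a, b₂) = 1. -/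
/-- CRT-style combination over a finset of primes. -/
lemma crt_combine (S : Finset ℕ) (hS : ∀ p ∈ S, p.Prime)
    (Q : ℕ → ℤ → Prop)
    (hQ : ∀ p ∈ S, ∀ k k' : ℤ, (p : ℤ) ∣ (k - k') → Q p k' → Q p k)
    (hex : ∀ p ∈ S, ∃ k, Q p k) : ∃ k, ∀ p ∈ S, Q p k := by
  classical
  induction S using Finset.induction_on with
  | empty => exact ⟨0, fun p hp => absurd hp (Finset.notMem_empty p)⟩
  | @insert q S hqS ih =>
    obtain ⟨k₁, hk₁⟩ := ih (fun p hp => hS p (Finset.mem_insert_of_mem hp))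
      (fun p hp => hQ p (Finset.mem_insert_of_mem hp))
      (fun p hp => hex p (Finset.mem_insert_of_mem hp))
    obtain ⟨kq, hkq⟩ := hex q (Finset.mem_insert_self q S)
    have hq : q.Prime := hS q (Finset.mem_insert_self q S)
    have hcop : IsCoprime (∏ p ∈ S, (p : ℤ)) (q : ℤ) := by
      apply IsCoprime.prod_left
      intro p hp
      have hp' : p.Prime := hS p (Finset.mem_insert_of_mem hp)
      have hne : p ≠ q := fun h => hqS (h ▸ hp)
      have hc : Nat.Coprime p q := (Nat.coprime_primes hp' hq).mpr hne
      exact Int.isCoprime_iff_gcd_eq_one.mpr (by simpa using hc)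
    obtain ⟨u, v, huv⟩ := hcop
    refine ⟨k₁ + (kq - k₁) * u * (∏ p ∈ S, (p : ℤ)), fun p hp => ?_⟩
    rcases Finset.mem_insert.mp hp with rfl | hp'
    · apply hQ p (Finset.mem_insert_self p S) _ kq _ hkq
      exact ⟨-((kq - k₁) * v), by linear_combination (kq - k₁) * huv⟩
    · apply hQ p (Finset.mem_insert_of_mem hp') _ k₁ _ (hk₁ p hp')
      obtain ⟨m, hm⟩ : (p : ℤ) ∣ ∏ r ∈ S, (r : ℤ) := Finset.dvd_prod_of_mem _ hp'
      exact ⟨(kq - k₁) * u * m, by linear_combination (kq - k₁) * u * hm⟩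

/-- Per-prime existence of a good shift. -/
lemma key_prime (p : ℕ) (hp : p.Prime) (A B C x y : ℤ) (hxy : A * x + B * y = 1)
    (hAC : ¬((p:ℤ) ∣ A ∧ (p:ℤ) ∣ C)) (hBC : ¬((p:ℤ) ∣ B ∧ (p:ℤ) ∣ C))
    (hAB : ¬((p:ℤ) ∣ A ∧ (p:ℤ) ∣ B))
    (h2 : p = 2 → ((p:ℤ) ∣ A ∨ (p:ℤ) ∣ B ∨ (p:ℤ) ∣ C)) :
    ∃ k : ℤ, ¬(p:ℤ) ∣ (C * x + k * B) ∧ ¬(p:ℤ) ∣ (C * y - k * A) := by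
  have pp : Prime (p : ℤ) := Int.prime_iff_natAbs_prime.mpr (by simpa using hp)
  by_cases hB : (p:ℤ) ∣ B
  · have hA : ¬(p:ℤ) ∣ A := fun h => hAB ⟨h, hB⟩
    have hC : ¬(p:ℤ) ∣ C := fun h => hBC ⟨hB, h⟩
    obtain ⟨u, v, huv⟩ := pp.coprime_iff_not_dvd.mpr hA
    -- huv : u * p + v * A = 1
    set k : ℤ := (C * y - 1) * v with hk
    have hd1 : (p:ℤ) ∣ (C * y - k * A - 1) :=
      ⟨(C * y - 1) * u, by rw [hk]; linear_combination (1 - C * y) * huv⟩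
    refine ⟨k, ?_, ?_⟩
    · intro h
      apply hC
      have hb2 : (p:ℤ) ∣ B * (C * y - k * A) := hB.mul_right _
      have : (p:ℤ) ∣ (C * x + k * B) * A + B * (C * y - k * A) := dvd_add (h.mul_right A) hb2
      have heq : (C * x + k * B) * A + B * (C * y - k * A) = C := by linear_combination C * hxy
      rwa [heq] at this
    · intro h
      have : (p:ℤ) ∣ 1 := by
        have := dvd_sub h hd1
        simpa using this
      exact pp.not_dvd_one this
  · have hcopB := pp.coprime_iff_not_dvd.mpr hB
    -- choose target t with ¬p∣t and ¬p∣(C - t*A)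
    obtain ⟨t, ht, htC⟩ : ∃ t : ℤ, ¬(p:ℤ) ∣ t ∧ ¬(p:ℤ) ∣ (C - t * A) := by
      by_cases hA : (p:ℤ) ∣ A
      · have hC : ¬(p:ℤ) ∣ C := fun h => hAC ⟨hA, h⟩
        refine ⟨1, pp.not_dvd_one, fun h => hC ?_⟩
        have : (p:ℤ) ∣ C - 1 * A + A := dvd_add h hA
        simpa using this
      · by_cases hC : (p:ℤ) ∣ C
        · refine ⟨1, pp.not_dvd_one, fun h => hA ?_⟩
          have : (p:ℤ) ∣ C - (C - 1 * A) := dvd_sub hC h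
          simpa using this
        · have hpne2 : p ≠ 2 := by
            intro h
            rcases h2 h with h' | h' | h' <;> [exact hA h'; exact hB h'; exact hC h']
          by_cases h1 : (p:ℤ) ∣ (C - A)
          · refine ⟨2, ?_, ?_⟩
            · intro h
              have : p ∣ 2 := by exact_mod_cast h
              exact hpne2 ((Nat.prime_dvd_prime_iff_eq hp Nat.prime_two).mp this)
            · intro h
              apply hA
              have h3 : (p:ℤ) ∣ (C - A) - (C - 2 * A) := dvd_sub h1 h
              rwa [show (C - A) - (C - 2 * A) = A by ring] at h3
          · exact ⟨1, pp.not_dvd_one, by simpa using h1⟩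
    obtain ⟨u, v, huv⟩ := hcopB
    -- huv : u * p + v * B = 1
    set k : ℤ := (t - C * x) * v with hk
    have hd1 : (p:ℤ) ∣ (C * x + k * B - t) :=
      ⟨-((t - C * x) * u), by rw [hk]; linear_combination (t - C * x) * huv⟩
    refine ⟨k, ?_, ?_⟩
    · intro h
      apply ht
      have := dvd_sub h hd1
      simpa using this
    · intro h
      apply htC
      have h1 : (p:ℤ) ∣ B * (C * y - k * A) := h.mul_left B
      have h2' : (p:ℤ) ∣ (C * x + k * B - t) * A := hd1.mul_right A
      have : (p:ℤ) ∣ B * (C * y - k * A) + (C * x + k * B - t) * A := dvd_add h1 h2'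
      have heq : B * (C * y - k * A) + (C * x + k * B - t) * A = C - t * A := by
        linear_combination C * hxy
      rwa [heq] at this

lemma coprime_of_forall_prime_not_dvd (d : ℕ) (hd : d ≠ 0) (z : ℤ)
    (h : ∀ p ∈ d.primeFactors, ¬(p:ℤ) ∣ z) : IsCoprime z (d : ℤ) := by
  rw [Int.isCoprime_iff_gcd_eq_one]
  by_contra hne
  set g := Int.gcd z d with hg
  have hp := Nat.minFac_prime hne
  have h1 : (g.minFac : ℤ) ∣ z :=
    dvd_trans (Int.natCast_dvd_natCast.mpr (Nat.minFac_dvd g)) (Int.gcd_dvd_left z (d:ℤ))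
  have h2 : g.minFac ∣ d := by
    have h3 : (g : ℤ) ∣ (d : ℤ) := Int.gcd_dvd_right z (d:ℤ)
    exact_mod_cast dvd_trans (Int.natCast_dvd_natCast.mpr (Nat.minFac_dvd g)) h3
  exact h _ (Nat.mem_primeFactors.mpr ⟨hp, h2, hd⟩) h1

/-- Theorem 5.7: existence of a Bézout-type presentation with coprimality conditions. -/
theorem stmt_5 (a b c : ℕ) (ha : 0 < a) (hb : 0 < b) (hc : 0 < c)
    (hgcd : Nat.gcd a b = Nat.gcd b c ∧ Nat.gcd b c = Nat.gcd a c)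
    (hval : (padicValNat 2 a = 0 ∧ padicValNat 2 b = 0 ∧ padicValNat 2 c = 0) ∨
      ¬(padicValNat 2 a = padicValNat 2 b ∧ padicValNat 2 b = padicValNat 2 c)) :
    ∃ a₁ b₂ : ℤ, a₁ * a + b * b₂ = c ∧ Int.gcd a₁ (b : ℤ) = 1 ∧
      Int.gcd (a : ℤ) b₂ = 1 := by
  set d := Nat.gcd a b with hd_def
  have hd : 0 < d := Nat.gcd_pos_of_pos_left b ha
  have hdac : Nat.gcd a c = d := (hgcd.1.trans hgcd.2).symm
  have hdbc : Nat.gcd b c = d := hgcd.1.symm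
  have hda : d ∣ a := Nat.gcd_dvd_left a b
  have hdb : d ∣ b := Nat.gcd_dvd_right a b
  have hdc : d ∣ c := hdac ▸ Nat.gcd_dvd_right a c
  set a' := a / d with ha'_def
  set b' := b / d with hb'_def
  set c' := c / d with hc'_def
  have haa : a = d * a' := (Nat.mul_div_cancel' hda).symm
  have hbb : b = d * b' := (Nat.mul_div_cancel' hdb).symm
  have hcc : c = d * c' := (Nat.mul_div_cancel' hdc).symm
  have cab : Nat.Coprime a' b' := Nat.coprime_div_gcd_div_gcd hd
  have cac : Nat.Coprime a' c' := by
    have := Nat.coprime_div_gcd_div_gcd (m := a) (n := c) (by rw [hdac]; exact hd)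
    rwa [hdac] at this
  have cbc : Nat.Coprime b' c' := by
    have := Nat.coprime_div_gcd_div_gcd (m := b) (n := c) (by rw [hdbc]; exact hd)
    rwa [hdbc] at this
  set A : ℤ := (a' : ℤ) with hA_def
  set B : ℤ := (b' : ℤ) with hB_def
  set C : ℤ := (c' : ℤ) with hC_def
  have hABcop : IsCoprime A B := Int.isCoprime_iff_gcd_eq_one.mpr (by exact cab)
  have hACcop : IsCoprime C A := Int.isCoprime_iff_gcd_eq_one.mpr
    (by rw [Int.gcd_comm]; exact cac)
  have hBCcop : IsCoprime C B := Int.isCoprime_iff_gcd_eq_one.mpr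
    (by rw [Int.gcd_comm]; exact cbc)
  obtain ⟨x, y, hxy'⟩ := hABcop
  have hxy : A * x + B * y = 1 := by linear_combination hxy'
  -- positivity of the parts
  have ha'0 : a' ≠ 0 := by
    intro h; rw [h, mul_zero] at haa; omega
  have hb'0 : b' ≠ 0 := by
    intro h; rw [h, mul_zero] at hbb; omega
  have hc'0 : c' ≠ 0 := by
    intro h; rw [h, mul_zero] at hcc; omega
  -- per-prime existence
  have hex : ∀ p ∈ d.primeFactors,
      ∃ k : ℤ, ¬(p:ℤ) ∣ (C * x + k * B) ∧ ¬(p:ℤ) ∣ (C * y - k * A) := by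
    intro p hpmem
    obtain ⟨hp, hpd, _⟩ := Nat.mem_primeFactors.mp hpmem
    have hAC : ¬((p:ℤ) ∣ A ∧ (p:ℤ) ∣ C) := by
      rintro ⟨h1, h2⟩
      have h1' : p ∣ a' := by rw [hA_def] at h1; exact_mod_cast h1
      have h2' : p ∣ c' := by rw [hC_def] at h2; exact_mod_cast h2
      have := Nat.dvd_gcd h1' h2'
      rw [cac.gcd_eq_one] at this
      exact hp.ne_one (Nat.dvd_one.mp this)
    have hBC : ¬((p:ℤ) ∣ B ∧ (p:ℤ) ∣ C) := by
      rintro ⟨h1, h2⟩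
      have h1' : p ∣ b' := by rw [hB_def] at h1; exact_mod_cast h1
      have h2' : p ∣ c' := by rw [hC_def] at h2; exact_mod_cast h2
      have := Nat.dvd_gcd h1' h2'
      rw [cbc.gcd_eq_one] at this
      exact hp.ne_one (Nat.dvd_one.mp this)
    have hAB : ¬((p:ℤ) ∣ A ∧ (p:ℤ) ∣ B) := by
      rintro ⟨h1, h2⟩
      have h1' : p ∣ a' := by rw [hA_def] at h1; exact_mod_cast h1
      have h2' : p ∣ b' := by rw [hB_def] at h2; exact_mod_cast h2
      have := Nat.dvd_gcd h1' h2'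
      rw [cab.gcd_eq_one] at this
      exact hp.ne_one (Nat.dvd_one.mp this)
    have h2 : p = 2 → ((p:ℤ) ∣ A ∨ (p:ℤ) ∣ B ∨ (p:ℤ) ∣ C) := by
      intro hp2
      by_contra hcon
      push_neg at hcon
      obtain ⟨hna, hnb, hnc⟩ := hcon
      have hna' : ¬ 2 ∣ a' := by rw [← hp2]; exact fun h => hna (by rw [hA_def]; exact_mod_cast h)
      have hnb' : ¬ 2 ∣ b' := by rw [← hp2]; exact fun h => hnb (by rw [hB_def]; exact_mod_cast h)
      have hnc' : ¬ 2 ∣ c' := by rw [← hp2]; exact fun h => hnc (by rw [hC_def]; exact_mod_cast h)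
      have hd2 : 2 ∣ d := hp2 ▸ hpd
      haveI : Fact (Nat.Prime 2) := ⟨Nat.prime_two⟩
      have hva : padicValNat 2 a = padicValNat 2 d := by
        rw [haa, padicValNat.mul hd.ne' ha'0, padicValNat.eq_zero_of_not_dvd hna', add_zero]
      have hvb : padicValNat 2 b = padicValNat 2 d := by
        rw [hbb, padicValNat.mul hd.ne' hb'0, padicValNat.eq_zero_of_not_dvd hnb', add_zero]
      have hvc : padicValNat 2 c = padicValNat 2 d := by
        rw [hcc, padicValNat.mul hd.ne' hc'0, padicValNat.eq_zero_of_not_dvd hnc', add_zero]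
      have hvd : 1 ≤ padicValNat 2 d := one_le_padicValNat_of_dvd hd.ne' hd2
      rcases hval with ⟨h1, _, _⟩ | h1
      · rw [hva] at h1; omega
      · exact h1 ⟨by rw [hva, hvb], by rw [hvb, hvc]⟩
    exact key_prime p hp A B C x y hxy hAC hBC hAB h2
  -- invariance of the condition under shifts divisible by p
  obtain ⟨k, hk⟩ := crt_combine d.primeFactors (fun p hp => (Nat.mem_primeFactors.mp hp).1)
    (fun p k => ¬(p:ℤ) ∣ (C * x + k * B) ∧ ¬(p:ℤ) ∣ (C * y - k * A))
    (by
      intro p hp k k' hkk' ⟨h1, h2⟩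
      constructor
      · intro h
        apply h1
        have := dvd_sub h (hkk'.mul_right B)
        rwa [show C * x + k * B - (k - k') * B = C * x + k' * B by ring] at this
      · intro h
        apply h2
        have := dvd_add h (hkk'.mul_right A)
        rwa [show C * y - k * A + (k - k') * A = C * y - k' * A by ring] at this)
    hex
  set a₁ : ℤ := C * x + k * B with ha₁_def
  set b₂ : ℤ := C * y - k * A with hb₂_def
  have za : (a : ℤ) = (d : ℤ) * A := by rw [haa]; push_cast; ring
  have zb : (b : ℤ) = (d : ℤ) * B := by rw [hbb]; push_cast; ring
  have zc : (c : ℤ) = (d : ℤ) * C := by rw [hcc]; push_cast; ring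
  refine ⟨a₁, b₂, ?_, ?_, ?_⟩
  · rw [za, zb, zc, ha₁_def, hb₂_def]
    linear_combination (d : ℤ) * C * hxy
  · -- gcd a₁ b = 1
    rw [← Int.isCoprime_iff_gcd_eq_one, zb]
    have c1 : IsCoprime a₁ (d : ℤ) := by
      apply coprime_of_forall_prime_not_dvd d hd.ne' a₁
      intro p hp
      exact (hk p hp).1
    have c2 : IsCoprime a₁ B := by
      have h1 : IsCoprime (C + B * (-b₂)) B := hBCcop.add_mul_left_left (-b₂)
      have heq : a₁ * A = C + B * (-b₂) := by
        rw [ha₁_def, hb₂_def]; linear_combination C * hxy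
      rw [← heq] at h1
      exact IsCoprime.of_mul_left_left h1
    exact IsCoprime.mul_right c1 c2
  · -- gcd a b₂ = 1
    rw [← Int.isCoprime_iff_gcd_eq_one, za]
    have c1 : IsCoprime b₂ (d : ℤ) := by
      apply coprime_of_forall_prime_not_dvd d hd.ne' b₂
      intro p hp
      exact (hk p hp).2
    have c2 : IsCoprime b₂ A := by
      have h1 : IsCoprime (C + A * (-a₁)) A := hACcop.add_mul_left_left (-a₁)
      have heq : B * b₂ = C + A * (-a₁) := by
        rw [ha₁_def, hb₂_def]; linear_combination C * hxy
      rw [← heq] at h1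
      exact IsCoprime.of_mul_left_right h1
    exact IsCoprime.mul_left c1.symm c2.symm
end

section
/- Let a, b, c be positive integers with gcd(a,b) = gcd(b,c) = gcd(a,c), and suppose there exist integers a₁, b₂ with a₁·a + b·b₂ = c, gcd(a₁,b) = 1, gcd(a,b₂) = 1. Then Δ((a₁, b, a − b₂, b₂, 0, 1)) = (a, b, c), where Δ(a₁,a₂,b₁,b₂,c₁,c₂) = (b₁c₁+b₁c₂+b₂c₂, a₁c₁+a₂c₁+a₂c₂, a₁b₁+a₁b₂+a₂b₂), and moreover (a₁, b, a − b₂, b₂, 0, 1) lies in S = {tuples in ℤ⁶ with gcd(a₁,a₂) = gcd(b₁,b₂) = gcd(c₁,c₂) = 1}. -/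
/-- From a Bézout-type presentation one obtains an explicit tuple in S mapping to (a,b,c). -/
theorem stmt_6 (a b c : ℕ) (ha : 0 < a) (hb : 0 < b) (hc : 0 < c)
    (hgcd : Nat.gcd a b = Nat.gcd b c ∧ Nat.gcd b c = Nat.gcd a c)
    (a₁ b₂ : ℤ) (heq : a₁ * a + b * b₂ = c)
    (h1 : Int.gcd a₁ (b : ℤ) = 1) (h2 : Int.gcd (a : ℤ) b₂ = 1) :
    Delta a₁ (b : ℤ) ((a : ℤ) - b₂) b₂ 0 1 = ((a : ℤ), (b : ℤ), (c : ℤ)) ∧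
    Int.gcd a₁ (b : ℤ) = 1 ∧ Int.gcd ((a : ℤ) - b₂) b₂ = 1 ∧
    Int.gcd (0 : ℤ) (1 : ℤ) = 1 := by
  refine ⟨?_, h1, ?_, by decide⟩
  · simp only [Delta, Prod.mk.injEq]
    refine ⟨by ring, by ring, by linarith [heq]⟩
  · have : IsCoprime ((a : ℤ)) b₂ := Int.isCoprime_iff_gcd_eq_one.mpr h2
    rw [Int.isCoprime_iff_gcd_eq_one.symm] at *
    have h := (IsCoprime.add_mul_right_left this (-1))
    simpa [mul_comm, sub_eq_add_neg] using h
end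

section
/- Let a, b, c be positive even integers with ν₂(a) = ν₂(b) = ν₂(c) (all three 2-adic valuations equal and ≥ 1). Then there is no tuple (a₁,a₂,b₁,b₂,c₁,c₂) of non-negative integers with gcd(a₁,a₂) = gcd(b₁,b₂) = gcd(c₁,c₂) = 1 such that a = b₁(c₁+c₂) + b₂c₂, b = a₁c₁ + a₂(c₁+c₂), and c = a₁(b₁+b₂) + a₂b₂. -/
set_option synthInstance.maxSize 2000 in
/-- Mod 2 incompatibility of the parity constraints. -/
lemma stmt_7_key : ∀ a1 a2 b1 b2 c1 c2 : ZMod 2,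
    ¬(a1 = 0 ∧ a2 = 0) → ¬(b1 = 0 ∧ b2 = 0) → ¬(c1 = 0 ∧ c2 = 0) →
    b1*(c1+c2) + b2*c2 = 0 → a1*c1 + a2*(c1+c2) = 0 → a1*(b1+b2) + a2*b2 = 0 →
    c1 + a2 = b1 + b2 → a1 + a2 = b1 + c2 → False := by decide

lemma stmt_7_odd_cast {u : ℕ} (h : Odd u) : (u : ZMod 2) = 1 := by
  obtain ⟨k, rfl⟩ := h
  push_cast
  rw [show (2 : ZMod 2) = 0 by decide]
  ring

/-- Extract the odd part: if `padicValNat 2 n = L` then `n = 2^L * u` with `u` odd. -/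
lemma stmt_7_extract (n L : ℕ) (hn : 0 < n) (hL : padicValNat 2 n = L) :
    ∃ u, Odd u ∧ n = 2 ^ L * u := by
  haveI : Fact (Nat.Prime 2) := ⟨Nat.prime_two⟩
  obtain ⟨u, hu⟩ : 2 ^ L ∣ n := hL ▸ pow_padicValNat_dvd
  refine ⟨u, ?_, hu⟩
  rcases Nat.even_or_odd u with he | ho
  · exfalso
    obtain ⟨k, hk⟩ := he
    refine pow_succ_padicValNat_not_dvd (p := 2) hn.ne' ⟨k, ?_⟩
    rw [hL, hu, hk]; ring
  · exact ho

/-- If a, b, c are positive with equal 2-adic valuations ≥ 1, then (a,b,c) is not in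
the image of S ∩ ℤ_{≥0}⁶ under Δ. -/
theorem stmt_7 (a b c : ℕ) (ha : 0 < a) (hb : 0 < b) (hc : 0 < c)
    (hℓ : 1 ≤ padicValNat 2 a)
    (hab : padicValNat 2 a = padicValNat 2 b)
    (hbc : padicValNat 2 b = padicValNat 2 c) :
    ¬ ∃ a₁ a₂ b₁ b₂ c₁ c₂ : ℕ,
        Nat.gcd a₁ a₂ = 1 ∧ Nat.gcd b₁ b₂ = 1 ∧ Nat.gcd c₁ c₂ = 1 ∧
        a = b₁*(c₁+c₂) + b₂*c₂ ∧ b = a₁*c₁ + a₂*(c₁+c₂) ∧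
        c = a₁*(b₁+b₂) + a₂*b₂ := by
  rintro ⟨a₁, a₂, b₁, b₂, c₁, c₂, hga, hgb, hgc, hA, hB, hC⟩
  obtain ⟨u, hou, hu⟩ := stmt_7_extract a (padicValNat 2 a) ha rfl
  obtain ⟨v, hov, hv⟩ := stmt_7_extract b (padicValNat 2 a) hb hab.symm
  obtain ⟨w, how, hw⟩ := stmt_7_extract c (padicValNat 2 a) hc (hbc ▸ hab).symm
  have hpow : 0 < 2 ^ padicValNat 2 a := Nat.pow_pos (by norm_num)
  -- key integer identities
  have I1 : c₁ * c + a₂ * a = (b₁ + b₂) * b := by rw [hA, hB, hC]; ring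
  have I2 : (a₁ + a₂) * a = b₁ * b + c₂ * c := by rw [hA, hB, hC]; ring
  -- cancel 2^L
  have J1 : c₁ * w + a₂ * u = (b₁ + b₂) * v := by
    refine Nat.eq_of_mul_eq_mul_left hpow ?_
    calc 2 ^ padicValNat 2 a * (c₁ * w + a₂ * u)
        = c₁ * (2 ^ padicValNat 2 a * w) + a₂ * (2 ^ padicValNat 2 a * u) := by ring
      _ = (b₁ + b₂) * (2 ^ padicValNat 2 a * v) := by rw [← hu, ← hv, ← hw]; exact I1
      _ = 2 ^ padicValNat 2 a * ((b₁ + b₂) * v) := by ring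
  have J2 : (a₁ + a₂) * u = b₁ * v + c₂ * w := by
    refine Nat.eq_of_mul_eq_mul_left hpow ?_
    calc 2 ^ padicValNat 2 a * ((a₁ + a₂) * u)
        = (a₁ + a₂) * (2 ^ padicValNat 2 a * u) := by ring
      _ = b₁ * (2 ^ padicValNat 2 a * v) + c₂ * (2 ^ padicValNat 2 a * w) := by
          rw [← hu, ← hv, ← hw]; exact I2
      _ = 2 ^ padicValNat 2 a * (b₁ * v + c₂ * w) := by ring
  -- pass to ZMod 2
  have h2 : (2 : ℕ) ∣ 2 ^ padicValNat 2 a :=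
    dvd_pow_self 2 (Nat.one_le_iff_ne_zero.mp hℓ)
  have ha0 : (a : ZMod 2) = 0 :=
    (ZMod.natCast_eq_zero_iff a 2).mpr (dvd_trans h2 ⟨u, hu⟩)
  have hb0 : (b : ZMod 2) = 0 :=
    (ZMod.natCast_eq_zero_iff b 2).mpr (dvd_trans h2 ⟨v, hv⟩)
  have hc0 : (c : ZMod 2) = 0 :=
    (ZMod.natCast_eq_zero_iff c 2).mpr (dvd_trans h2 ⟨w, hw⟩)
  have hu1 : (u : ZMod 2) = 1 := stmt_7_odd_cast hou
  have hv1 : (v : ZMod 2) = 1 := stmt_7_odd_cast hov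
  have hw1 : (w : ZMod 2) = 1 := stmt_7_odd_cast how
  -- not-both-even from gcd = 1
  have hg : ∀ x y : ℕ, Nat.gcd x y = 1 → ¬((x : ZMod 2) = 0 ∧ (y : ZMod 2) = 0) := by
    rintro x y hxy ⟨hx, hy⟩
    have hdx : 2 ∣ x := (ZMod.natCast_eq_zero_iff x 2).mp hx
    have hdy : 2 ∣ y := (ZMod.natCast_eq_zero_iff y 2).mp hy
    have : (2 : ℕ) ∣ 1 := hxy ▸ Nat.dvd_gcd hdx hdy
    norm_num at this
  -- cast the equations
  have e1 : (b₁ : ZMod 2) * (c₁ + c₂) + b₂ * c₂ = 0 := by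
    have := congrArg (Nat.cast : ℕ → ZMod 2) hA
    push_cast at this
    rw [ha0] at this
    exact this.symm
  have e2 : (a₁ : ZMod 2) * c₁ + a₂ * (c₁ + c₂) = 0 := by
    have := congrArg (Nat.cast : ℕ → ZMod 2) hB
    push_cast at this
    rw [hb0] at this
    exact this.symm
  have e3 : (a₁ : ZMod 2) * (b₁ + b₂) + a₂ * b₂ = 0 := by
    have := congrArg (Nat.cast : ℕ → ZMod 2) hC
    push_cast at this
    rw [hc0] at this
    exact this.symm
  have j1 : (c₁ : ZMod 2) + a₂ = b₁ + b₂ := by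
    have := congrArg (Nat.cast : ℕ → ZMod 2) J1
    push_cast at this
    rw [hu1, hv1, hw1] at this
    simpa using this
  have j2 : (a₁ : ZMod 2) + a₂ = b₁ + c₂ := by
    have := congrArg (Nat.cast : ℕ → ZMod 2) J2
    push_cast at this
    rw [hu1, hv1, hw1] at this
    simpa using this
  exact stmt_7_key a₁ a₂ b₁ b₂ c₁ c₂ (hg _ _ hga) (hg _ _ hgb) (hg _ _ hgc)
    e1 e2 e3 j1 j2
end

section
/- Suppose a, b, c are even natural numbers and (a₁,a₂,b₁,b₂,c₁,c₂) are integers with gcd(a₁,a₂) = gcd(b₁,b₂) = gcd(c₁,c₂) = 1, satisfying a = b₁(c₁+c₂) + b₂c₂, b = a₁c₁ + a₂(c₁+c₂), c = a₁(b₁+b₂) + a₂b₂. Then c₁ + c₂ ≡ b₂ ≡ a₁ (mod 2) and c₁ ≡ a₂ ≡ b₁ + b₂ (mod 2). -/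
/-- Parity congruences forced by the three bilinear equations when a, b, c are even. -/
theorem stmt_8 (a b c a₁ a₂ b₁ b₂ c₁ c₂ : ℤ)
    (hA : Even a) (hB : Even b) (hC : Even c)
    (ga : Int.gcd a₁ a₂ = 1) (gb : Int.gcd b₁ b₂ = 1) (gc : Int.gcd c₁ c₂ = 1)
    (ea : a = b₁*(c₁+c₂) + b₂*c₂) (eb : b = a₁*c₁ + a₂*(c₁+c₂))
    (ec : c = a₁*(b₁+b₂) + a₂*b₂) :
    (c₁ + c₂) % 2 = b₂ % 2 ∧ b₂ % 2 = a₁ % 2 ∧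
    c₁ % 2 = a₂ % 2 ∧ a₂ % 2 = (b₁ + b₂) % 2 := by
  have key : ∀ x y : ℤ, (x : ZMod 2) = (y : ZMod 2) → x % 2 = y % 2 := by
    intro x y h
    exact (ZMod.intCast_eq_intCast_iff' x y 2).mp h
  have hga : ¬((a₁ : ZMod 2) = 0 ∧ (a₂ : ZMod 2) = 0) := by
    rintro ⟨h1, h2⟩
    have d1 := (ZMod.intCast_zmod_eq_zero_iff_dvd a₁ 2).mp h1
    have d2 := (ZMod.intCast_zmod_eq_zero_iff_dvd a₂ 2).mp h2
    have h3 : (2:ℤ) ∣ (Int.gcd a₁ a₂ : ℤ) := Int.dvd_coe_gcd d1 d2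
    rw [ga] at h3; norm_num at h3
  have hgb : ¬((b₁ : ZMod 2) = 0 ∧ (b₂ : ZMod 2) = 0) := by
    rintro ⟨h1, h2⟩
    have d1 := (ZMod.intCast_zmod_eq_zero_iff_dvd b₁ 2).mp h1
    have d2 := (ZMod.intCast_zmod_eq_zero_iff_dvd b₂ 2).mp h2
    have h3 : (2:ℤ) ∣ (Int.gcd b₁ b₂ : ℤ) := Int.dvd_coe_gcd d1 d2
    rw [gb] at h3; norm_num at h3
  have hgc : ¬((c₁ : ZMod 2) = 0 ∧ (c₂ : ZMod 2) = 0) := by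
    rintro ⟨h1, h2⟩
    have d1 := (ZMod.intCast_zmod_eq_zero_iff_dvd c₁ 2).mp h1
    have d2 := (ZMod.intCast_zmod_eq_zero_iff_dvd c₂ 2).mp h2
    have h3 : (2:ℤ) ∣ (Int.gcd c₁ c₂ : ℤ) := Int.dvd_coe_gcd d1 d2
    rw [gc] at h3; norm_num at h3
  have ha0 : (a : ZMod 2) = 0 := by
    obtain ⟨k, hk⟩ := hA
    subst hk; push_cast
    have h2 : (2 : ZMod 2) = 0 := rfl
    ring_nf; simp [h2]
  have hb0 : (b : ZMod 2) = 0 := by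
    obtain ⟨k, hk⟩ := hB
    subst hk; push_cast
    have h2 : (2 : ZMod 2) = 0 := rfl
    ring_nf; simp [h2]
  have hc0 : (c : ZMod 2) = 0 := by
    obtain ⟨k, hk⟩ := hC
    subst hk; push_cast
    have h2 : (2 : ZMod 2) = 0 := rfl
    ring_nf; simp [h2]
  have Ea : (0 : ZMod 2) = b₁*(c₁+c₂) + b₂*c₂ := by
    rw [← ha0, ea]; push_cast; ring
  have Eb : (0 : ZMod 2) = a₁*c₁ + a₂*(c₁+c₂) := by
    rw [← hb0, eb]; push_cast; ring
  have Ec : (0 : ZMod 2) = a₁*(b₁+b₂) + a₂*b₂ := by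
    rw [← hc0, ec]; push_cast; ring
  have main : ((c₁ : ZMod 2) + c₂ = b₂) ∧ ((b₂ : ZMod 2) = a₁) ∧
      ((c₁ : ZMod 2) = a₂) ∧ ((a₂ : ZMod 2) = b₁ + b₂) := by
    have Ea' : (0 : ZMod 2) = (b₁:ZMod 2)*((c₁:ZMod 2)+(c₂:ZMod 2)) + (b₂:ZMod 2)*(c₂:ZMod 2) := by
      push_cast at Ea ⊢; exact Ea
    revert Ea Eb Ec hga hgb hgc
    generalize (a₁ : ZMod 2) = x1
    generalize (a₂ : ZMod 2) = x2
    generalize (b₁ : ZMod 2) = y1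
    generalize (b₂ : ZMod 2) = y2
    generalize (c₁ : ZMod 2) = z1
    generalize (c₂ : ZMod 2) = z2
    revert x1 x2 y1 y2 z1 z2
    set_option synthInstance.maxSize 2000 in decide
  refine ⟨key _ _ ?_, key _ _ ?_, key _ _ ?_, key _ _ ?_⟩ <;> push_cast
  · exact main.1
  · exact main.2.1
  · exact main.2.2.1
  · exact main.2.2.2
end

section
/- Let R ⊆ ℂ with M := inf{|x| : x ∈ R, x ≠ 0} > 0. Consider an array row pair (x₁, …, xₙ) and (y₁, …, yₙ) of nonzero elements of R together with boundary values d_j, d_{j+1}, … all of absolute value at most P, with P ≥ 1, satisfying the frieze relations x₁y₁ − d_{j+1}x₂ = d_j d_{j+2} and x_k y_k − x_{k+1} y_{k−1} = d_j d_{j+k+1} for 2 ≤ k ≤ n (with x_{n+1} = d_{j−1}). Then |x₁| ≤ P²(PM + (n−1)P² + M)/M². -/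
/-- Lemma 6.1: bound on the quiddity-cycle entry |x₁| of a frieze pattern
with coefficients with nonzero entries in R, in terms of M and P. -/
theorem stmt_16 (R : Set ℂ) (M P : ℝ) (hM : 0 < M)
    (hMinf : ∀ z ∈ R, z ≠ 0 → M ≤ ‖z‖)
    (n : ℕ) (hn : 1 ≤ n) (j : ℤ)
    (x y : ℕ → ℂ) (d : ℤ → ℂ)
    (hx : ∀ k, 1 ≤ k → k ≤ n → x k ∈ R ∧ x k ≠ 0)
    (hy : ∀ k, 1 ≤ k → k ≤ n → y k ∈ R ∧ y k ≠ 0)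
    (hd : ∀ i : ℤ, d i ∈ R ∧ d i ≠ 0)
    (hP : 1 ≤ P) (hdP : ∀ i : ℤ, ‖d i‖ ≤ P)
    (hxlast : x (n + 1) = d (j - 1))
    (hrel1 : x 1 * y 1 - d (j + 1) * x 2 = d j * d (j + 2))
    (hrel : ∀ k : ℕ, 2 ≤ k → k ≤ n →
      x k * y k - x (k + 1) * y (k - 1) = d j * d (j + (k : ℤ) + 1)) :
    ‖x 1‖ ≤ P ^ 2 * (P * M + ((n : ℝ) - 1) * P ^ 2 + M) / M ^ 2 := by
  have hP0 : (0:ℝ) < P := lt_of_lt_of_le one_pos hP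
  have hMy : ∀ k, 1 ≤ k → k ≤ n → M ≤ ‖y k‖ := fun k h1 h2 =>
    hMinf _ (hy k h1 h2).1 (hy k h1 h2).2
  have key : ∀ m : ℕ, ∀ k : ℕ, 2 ≤ k → k + m = n + 1 →
      M ^ 2 * ‖x k‖ ≤ ‖y (k - 1)‖ * (P * M + m * P ^ 2) := by
    intro m
    induction m with
    | zero =>
      intro k hk2 hkeq
      have hk : k = n + 1 := by omega
      subst hk
      have hyn : M ≤ ‖y n‖ := hMy n hn le_rfl
      have hxb : ‖x (n + 1)‖ ≤ P := by rw [hxlast]; exact hdP _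
      simp only [Nat.add_sub_cancel, Nat.cast_zero]
      nlinarith [mul_le_mul_of_nonneg_left hxb (mul_pos hM hM).le,
        mul_le_mul_of_nonneg_right hyn (mul_pos hP0 hM).le]
    | succ m ih =>
      intro k hk2 hkeq
      have hkn : k ≤ n := by omega
      have hYk : M ≤ ‖y k‖ := hMy k (by omega) hkn
      have hYk1 : M ≤ ‖y (k - 1)‖ := hMy (k-1) (by omega) (by omega)
      have hIH : M ^ 2 * ‖x (k+1)‖ ≤
          ‖y k‖ * (P * M + m * P ^ 2) := by
        have := ih (k+1) (by omega) (by omega)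
        simpa using this
      have hrk := hrel k hk2 hkn
      have heq : x k * y k = x (k+1) * y (k-1) + d j * d (j + (k:ℤ) + 1) := by
        linear_combination hrk
      have htri : ‖x k‖ * ‖y k‖ ≤
          ‖x (k+1)‖ * ‖y (k-1)‖ + P * P := by
        have h1 : ‖x k * y k‖ ≤
            ‖x (k+1) * y (k-1)‖ + ‖d j * d (j + (k:ℤ) + 1)‖ := by
          rw [heq]; exact norm_add_le _ _
        rw [norm_mul, norm_mul, norm_mul] at h1
        have h2 : ‖d j‖ * ‖d (j + (k:ℤ) + 1)‖ ≤ P * P :=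
          mul_le_mul (hdP _) (hdP _) (norm_nonneg _) (le_of_lt hP0)
        linarith
      have hYkpos : 0 < ‖y k‖ := lt_of_lt_of_le hM hYk
      have hstep : (M ^ 2 * ‖x k‖) * ‖y k‖ ≤
          (‖y (k-1)‖ * (P * M + (↑(m+1):ℝ) * P ^ 2)) * ‖y k‖ := by
        push_cast
        nlinarith [mul_le_mul_of_nonneg_left htri (sq_nonneg M),
          mul_le_mul_of_nonneg_right hIH (norm_nonneg (y (k-1))),
          mul_le_mul_of_nonneg_right
            (mul_le_mul hYk hYk1 hM.le (norm_nonneg _)) (sq_nonneg P),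
          norm_nonneg (x (k+1)), norm_nonneg (x k)]
      exact le_of_mul_le_mul_right hstep hYkpos
  -- apply with k = 2, m = n - 1
  have hx2 : M ^ 2 * ‖x 2‖ ≤
      ‖y 1‖ * (P * M + ((n:ℝ) - 1) * P ^ 2) := by
    have h := key (n - 1) 2 le_rfl (by omega)
    have hcast : ((n - 1 : ℕ) : ℝ) = (n : ℝ) - 1 := by
      push_cast [Nat.cast_sub hn]; ring
    rw [hcast] at h
    simpa using h
  have hY1 : M ≤ ‖y 1‖ := hMy 1 le_rfl hn
  have hY1pos : 0 < ‖y 1‖ := lt_of_lt_of_le hM hY1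
  have heq1 : x 1 * y 1 = d (j+1) * x 2 + d j * d (j+2) := by linear_combination hrel1
  have htri1 : ‖x 1‖ * ‖y 1‖ ≤ P * ‖x 2‖ + P * P := by
    have h1 : ‖x 1 * y 1‖ ≤
        ‖d (j+1) * x 2‖ + ‖d j * d (j+2)‖ := by
      rw [heq1]; exact norm_add_le _ _
    rw [norm_mul, norm_mul, norm_mul] at h1
    have h2 : ‖d (j+1)‖ * ‖x 2‖ ≤ P * ‖x 2‖ :=
      mul_le_mul_of_nonneg_right (hdP _) (norm_nonneg _)
    have h3 : ‖d j‖ * ‖d (j+2)‖ ≤ P * P :=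
      mul_le_mul (hdP _) (hdP _) (norm_nonneg _) (le_of_lt hP0)
    linarith
  have hn1 : (1:ℝ) ≤ (n:ℝ) := by exact_mod_cast hn
  have hA : (M ^ 2 * ‖x 1‖) * ‖y 1‖ ≤
      ‖y 1‖ * (P ^ 2 * M + ((n:ℝ) - 1) * P ^ 3 + M * P ^ 2) := by
    nlinarith [mul_le_mul_of_nonneg_left htri1 (sq_nonneg M),
      mul_le_mul_of_nonneg_left hx2 hP0.le,
      mul_le_mul_of_nonneg_right hY1 (by positivity : (0:ℝ) ≤ M * P ^ 2),
      norm_nonneg (x 2), norm_nonneg (x 1)]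
  have hB : P ^ 2 * M + ((n:ℝ) - 1) * P ^ 3 + M * P ^ 2 ≤
      P ^ 2 * (P * M + ((n:ℝ) - 1) * P ^ 2 + M) := by
    have hPc : P ^ 3 ≤ P ^ 4 := pow_le_pow_right₀ hP (by norm_num)
    have hPb : P ^ 2 ≤ P ^ 3 := pow_le_pow_right₀ hP (by norm_num)
    have h1 : ((n:ℝ) - 1) * P ^ 3 ≤ ((n:ℝ) - 1) * P ^ 4 :=
      mul_le_mul_of_nonneg_left hPc (by linarith)
    have h2 : M * P ^ 2 ≤ M * P ^ 3 := mul_le_mul_of_nonneg_left hPb hM.le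
    nlinarith
  have hstep : (M ^ 2 * ‖x 1‖) * ‖y 1‖ ≤
      (P ^ 2 * (P * M + ((n:ℝ) - 1) * P ^ 2 + M)) * ‖y 1‖ := by
    calc (M ^ 2 * ‖x 1‖) * ‖y 1‖
        ≤ ‖y 1‖ * (P ^ 2 * M + ((n:ℝ) - 1) * P ^ 3 + M * P ^ 2) := hA
      _ ≤ ‖y 1‖ * (P ^ 2 * (P * M + ((n:ℝ) - 1) * P ^ 2 + M)) :=
          mul_le_mul_of_nonneg_left hB (norm_nonneg _)
      _ = (P ^ 2 * (P * M + ((n:ℝ) - 1) * P ^ 2 + M)) * ‖y 1‖ := by ring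
  have hfin : M ^ 2 * ‖x 1‖ ≤ P ^ 2 * (P * M + ((n:ℝ) - 1) * P ^ 2 + M) :=
    le_of_mul_le_mul_right hstep hY1pos
  rw [le_div_iff₀ (by positivity : (0:ℝ) < M ^ 2)]
  linarith
end

section
/- Let d₀, …, d_{n+2} be nonzero complex numbers (indices mod n+3) and c₀, …, c_{n+2} complex numbers, and for each k let μ_k = [[0, −d_k/d_{k−1}],[1, c_{k−1}/d_{k−1}]]. Suppose (c_{i,j}) is a tame frieze pattern with coefficients of height n with c_{i,i+1} = d_i and c_{i,i+2} = c_i. Then the product μ₁ μ₂ ⋯ μ_{n+3} equals −Id (the negative of the 2×2 identity matrix). -/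
open Matrix

/-- Corollary 2.9(2): for a tame frieze pattern with coefficients of height n,
the product of the μ-matrices μ₁ ⋯ μ_{n+3} equals −Id. -/
theorem stmt_17 (n : ℕ) (c : ℤ → ℤ → ℂ)
    (hzero1 : ∀ i : ℤ, c i i = 0)
    (hzero2 : ∀ i : ℤ, c i (i + n + 3) = 0)
    (hbound : ∀ i : ℤ, c i (i + 1) ≠ 0)
    (hloc : ∀ i j : ℤ, i ≤ j → j ≤ i + n + 2 →
      c i j * c (i + 1) (j + 1) - c i (j + 1) * c (i + 1) j =
        c (i + 1) (i + n + 3) * c j (j + 1))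
    (htame : ∀ i j : ℤ, i + 2 ≤ j → j + 2 ≤ i + n + 3 →
      Matrix.det
        (!![c i j, c i (j+1), c i (j+2);
            c (i+1) j, c (i+1) (j+1), c (i+1) (j+2);
            c (i+2) j, c (i+2) (j+1), c (i+2) (j+2)] : Matrix (Fin 3) (Fin 3) ℂ) = 0) :
    (((List.range (n + 3)).map (fun k : ℕ =>
        (!![0, -(c ((k : ℤ) + 1) ((k : ℤ) + 2)) / (c (k : ℤ) ((k : ℤ) + 1));
            1, (c (k : ℤ) ((k : ℤ) + 2)) / (c (k : ℤ) ((k : ℤ) + 1))] :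
          Matrix (Fin 2) (Fin 2) ℂ))).prod) = -1 := by
  -- nonvanishing of shifted boundary entries
  have hb2 : ∀ i : ℤ, c (i+1) (i+2) ≠ 0 := by
    intro i; have h := hbound (i+1)
    rwa [show (i:ℤ)+1+1 = i+2 by ring] at h
  -- Lemma A : c (i+1) (i+n+3) = c i (i+1)
  have hE : ∀ i : ℤ, c (i+1) (i + (n:ℤ) + 3) = c i (i+1) := by
    intro i
    have h := hloc i (i+1) (by omega) (by omega)
    rw [show (i:ℤ)+1+1 = i+2 by ring, hzero1 (i+1), mul_zero, sub_zero] at h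
    exact (mul_right_cancel₀ (hb2 i) h).symm
  -- Lemma C : c (i+1) i = - c i (i+1)
  have hsub : ∀ i : ℤ, c (i+1) i = - c i (i+1) := by
    intro i
    have h := hloc i i le_rfl (by omega)
    rw [hzero1 i, hE i] at h
    have h2 : c i (i+1) * c (i+1) i = c i (i+1) * (- c i (i+1)) := by
      linear_combination -h
    exact mul_left_cancel₀ (hbound i) h2
  -- Lemma B : c i (i+n+2) = c (i+n+2) (i+n+3)
  have htop : ∀ i : ℤ, c i (i + (n:ℤ) + 2) = c (i + n + 2) (i + n + 3) := by
    intro i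
    have h := hloc i (i + (n:ℤ) + 2) (by omega) (by omega)
    rw [show i + (n:ℤ) + 2 + 1 = i + n + 3 by ring, hzero2 i, hE i] at h
    have h2 : c i (i+1) * c i (i + (n:ℤ) + 2)
        = c i (i+1) * c (i + n + 2) (i + n + 3) := by
      linear_combination h
    exact mul_left_cancel₀ (hbound i) h2
  -- the key linear recurrence along rows, by downward induction (tameness)
  have key : ∀ m : ℕ, (m:ℤ) ≤ (n:ℤ) + 2 → ∀ i k : ℤ, i + (m:ℤ) = k + 1 →
      c k (k+1) * c i (k+2) = c k (k+2) * c i (k+1) - c (k+1) (k+2) * c i k := by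
    intro m
    induction m using Nat.strong_induction_on with
    | _ m IH =>
      rcases m with _ | (_ | (_ | m))
      · intro _ i k hik
        have hi : i = k + 1 := by push_cast at hik; linarith
        subst hi
        rw [hzero1 (k+1), hsub k]
        ring
      · intro _ i k hik
        have hi : i = k := by push_cast at hik; linarith
        subst hi
        rw [hzero1 i]
        ring
      · intro _ i k hik
        have hk : k = i + 1 := by push_cast at hik; linarith
        subst hk
        rw [show (i:ℤ)+1+1 = i+2 by ring, show (i:ℤ)+1+2 = i+3 by ring]
        have h := hloc i (i+2) (by omega) (by omega)
        rw [show (i:ℤ)+2+1 = i+3 by ring, hE i] at h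
        linear_combination -h
      · intro hm i k hik
        push_cast at hm hik
        have E1 := IH (m+2) (by omega) (by push_cast; omega) (i+1) k
          (by push_cast; linarith)
        have E2 := IH (m+1) (by omega) (by push_cast; omega) (i+2) k
          (by push_cast; linarith)
        have hE' : c (i+2) (i + 1 + (n:ℤ) + 3) = c (i+1) (i+2) := by
          have h := hE (i+1)
          rwa [show (i:ℤ)+1+1 = i+2 by ring] at h
        have h2 := hloc (i+1) k (by omega) (by omega)
        rw [show (i:ℤ)+1+1 = i+2 by ring, hE'] at h2
        have h3 := htame i k (by omega) (by omega)
        simp [Matrix.det_fin_three] at h3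
        have hX : (c k (k+1) * c i (k+2) -
            (c k (k+2) * c i (k+1) - c (k+1) (k+2) * c i k)) *
            (c (i+1) (i+2) * c k (k+1)) = 0 := by
          linear_combination (c k (k+1)) * h3
            + (c i k * c (i+2) (k+1) - c i (k+1) * c (i+2) k) * E1
            - (c i k * c (i+1) (k+1) - c i (k+1) * c (i+1) k) * E2
            - (c k (k+1) * c i (k+2) - c k (k+2) * c i (k+1)
                + c (k+1) (k+2) * c i k) * h2
        have hne : c (i+1) (i+2) * c k (k+1) ≠ 0 :=
          mul_ne_zero (hb2 i) (hbound k)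
        have h0 := (mul_eq_zero.mp hX).resolve_right hne
        linear_combination h0
  -- abbreviate the μ-matrix function
  set f : ℕ → Matrix (Fin 2) (Fin 2) ℂ := fun k : ℕ =>
    (!![0, -(c ((k : ℤ) + 1) ((k : ℤ) + 2)) / (c (k : ℤ) ((k : ℤ) + 1));
        1, (c (k : ℤ) ((k : ℤ) + 2)) / (c (k : ℤ) ((k : ℤ) + 1))] :
      Matrix (Fin 2) (Fin 2) ℂ) with hf
  have hb0 : c 0 1 ≠ 0 := by have := hbound 0; norm_num at this; exact this
  -- one step of the product
  have hstep : ∀ j : ℕ, (j:ℤ) ≤ (n:ℤ) + 1 →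
      !![c 0 (j:ℤ), c 0 ((j:ℤ)+1); c 1 (j:ℤ), c 1 ((j:ℤ)+1)] * f j
        = !![c 0 ((j:ℤ)+1), c 0 ((j:ℤ)+2); c 1 ((j:ℤ)+1), c 1 ((j:ℤ)+2)] := by
    intro j hj
    have k0 := key (j+1) (by push_cast; omega) 0 (j:ℤ) (by push_cast; ring)
    have k1 := key j (by omega) 1 (j:ℤ) (by ring)
    have hd := hbound (j:ℤ)
    ext r s
    fin_cases r <;> fin_cases s <;>
      simp [hf, Matrix.mul_apply, Fin.sum_univ_two]
    · rw [← mul_div_assoc, ← mul_div_assoc, ← add_div, div_eq_iff hd]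
      linear_combination -k0
    · rw [← mul_div_assoc, ← mul_div_assoc, ← add_div, div_eq_iff hd]
      linear_combination -k1
  -- the partial products
  have hP : ∀ m : ℕ, (m:ℤ) ≤ (n:ℤ)+2 →
      !![c 0 0, c 0 1; c 1 0, c 1 1] * ((List.range m).map f).prod
        = !![c 0 (m:ℤ), c 0 ((m:ℤ)+1); c 1 (m:ℤ), c 1 ((m:ℤ)+1)] := by
    intro m
    induction m with
    | zero => intro _; norm_num
    | succ m ih =>
      intro hm
      rw [List.range_succ, List.map_append, List.prod_append, List.map_cons,
        List.map_nil, List.prod_cons, List.prod_nil, mul_one, ← mul_assoc,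
        ih (by push_cast at hm ⊢; omega), hstep m (by push_cast at hm ⊢; omega),
        show ((m+1:ℕ):ℤ) = (m:ℤ)+1 by push_cast; ring,
        show (m:ℤ)+1+1 = (m:ℤ)+2 by ring]
  -- boundary values
  set D := c ((n:ℤ)+3) ((n:ℤ)+4) with hDdef
  have hc00 : c 0 0 = 0 := hzero1 0
  have hc11 : c 1 1 = 0 := hzero1 1
  have hc10 : c 1 0 = - c 0 1 := by
    have := hsub 0; norm_num at this; exact this
  have hc03 : c 0 ((n:ℤ)+3) = 0 := by
    have := hzero2 0; rwa [show (0:ℤ)+(n:ℤ)+3 = (n:ℤ)+3 by ring] at this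
  have hc02 : c 0 ((n:ℤ)+2) = c ((n:ℤ)+2) ((n:ℤ)+3) := by
    have := htop 0
    rwa [show (0:ℤ)+(n:ℤ)+2 = (n:ℤ)+2 by ring,
      show (0:ℤ)+(n:ℤ)+3 = (n:ℤ)+3 by ring] at this
  have hc13 : c 1 ((n:ℤ)+3) = D := by
    have := htop 1
    rwa [show (1:ℤ)+(n:ℤ)+2 = (n:ℤ)+3 by ring,
      show (1:ℤ)+(n:ℤ)+3 = (n:ℤ)+4 by ring] at this
  have hc14 : c 1 ((n:ℤ)+4) = 0 := by
    have := hzero2 1; rwa [show (1:ℤ)+(n:ℤ)+3 = (n:ℤ)+4 by ring] at this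
  have hd2 : c ((n:ℤ)+2) ((n:ℤ)+3) ≠ 0 := by
    have := hbound ((n:ℤ)+2); rwa [show (n:ℤ)+2+1 = (n:ℤ)+3 by ring] at this
  have hD : D ≠ 0 := by
    have := hbound ((n:ℤ)+3); rwa [show (n:ℤ)+3+1 = (n:ℤ)+4 by ring] at this
  have hk1 := key (n+2) (by push_cast; omega) 1 ((n:ℤ)+2) (by push_cast; ring)
  rw [show (n:ℤ)+2+1 = (n:ℤ)+3 by ring, show (n:ℤ)+2+2 = (n:ℤ)+4 by ring,
    hc14, hc13] at hk1
  -- the last factor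
  have hlast : !![c 0 ((n:ℤ)+2), c 0 ((n:ℤ)+3); c 1 ((n:ℤ)+2), c 1 ((n:ℤ)+3)] * f (n+2)
      = !![0, -D; D, 0] := by
    have hcast : ((n+2:ℕ):ℤ) = (n:ℤ)+2 := by push_cast; ring
    rw [hDdef] at hk1
    ext r s
    fin_cases r <;> fin_cases s <;>
      simp [hf, Matrix.mul_apply, Fin.sum_univ_two, hcast,
        show (n:ℤ)+2+1 = (n:ℤ)+3 by ring, show (n:ℤ)+2+2 = (n:ℤ)+4 by ring,
        hc02, hc03, hc13, hc14]
    · rw [hDdef, ← mul_div_assoc, div_eq_iff hd2]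
      ring
    · rw [hDdef, ← mul_div_assoc, ← mul_div_assoc, ← add_div, div_eq_iff hd2]
      linear_combination -hk1
  set P := (List.map f (List.range (n+3))).prod with hPdef
  have hQ : !![c 0 0, c 0 1; c 1 0, c 1 1] * P = !![0, -D; D, 0] := by
    rw [hPdef, show n+3 = (n+2)+1 from rfl, List.range_succ, List.map_append,
      List.prod_append, List.map_cons, List.map_nil, List.prod_cons, List.prod_nil,
      mul_one, ← mul_assoc, hP (n+2) (by push_cast; omega),
      show ((n+2:ℕ):ℤ) = (n:ℤ)+2 by push_cast; ring,
      show (n:ℤ)+2+1 = (n:ℤ)+3 by ring]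
    exact hlast
  rw [hc00, hc10, hc11] at hQ
  -- extract the entries of P
  have hent : ∀ r s : Fin 2,
      (!![0, c 0 1; -c 0 1, 0] * P) r s = (!![0, -D; D, 0] : Matrix (Fin 2) (Fin 2) ℂ) r s :=
    fun r s => congrFun (congrFun hQ r) s
  have hp10 : c 0 1 * P 1 0 = 0 := by
    have h := hent 0 0
    simp [Matrix.mul_apply, Fin.sum_univ_two] at h
    rcases h with h | h
    · exact absurd h hb0
    · rw [h, mul_zero]
  have hp11 : c 0 1 * P 1 1 = -D := by
    have h := hent 0 1
    simp [Matrix.mul_apply, Fin.sum_univ_two] at h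
    linear_combination h
  have hp00 : c 0 1 * P 0 0 = -D := by
    have h := hent 1 0
    simp [Matrix.mul_apply, Fin.sum_univ_two] at h
    linear_combination -h
  have hp01 : c 0 1 * P 0 1 = 0 := by
    have h := hent 1 1
    simp [Matrix.mul_apply, Fin.sum_univ_two] at h
    rcases h with h | h
    · exact absurd h hb0
    · rw [h, mul_zero]
  -- determinant of the product, telescoping
  have hdet : ∀ m : ℕ, (((List.range m).map f).prod).det = c (m:ℤ) ((m:ℤ)+1) / c 0 1 := by
    intro m
    induction m with
    | zero =>
      norm_num
      exact (div_self hb0).symm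
    | succ m ih =>
      rw [List.range_succ, List.map_append, List.prod_append, List.map_cons, List.map_nil,
        List.prod_cons, List.prod_nil, mul_one, Matrix.det_mul, ih, hf]
      rw [Matrix.det_fin_two_of,
        show ((m+1:ℕ):ℤ) = (m:ℤ)+1 by push_cast; ring,
        show (m:ℤ)+1+1 = (m:ℤ)+2 by ring]
      have hdm := hbound (m:ℤ)
      field_simp
      ring
  have hdP := hdet (n+3)
  rw [show ((n+3:ℕ):ℤ) = (n:ℤ)+3 by push_cast; ring,
    show (n:ℤ)+3+1 = (n:ℤ)+4 by ring, ← hDdef, ← hPdef, Matrix.det_fin_two] at hdP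
  -- deduce D = c 0 1
  have h5 : (c 0 1 * P 0 0) * (c 0 1 * P 1 1) - (c 0 1 * P 0 1) * (c 0 1 * P 1 0)
      = c 0 1 * c 0 1 * (D / c 0 1) := by
    rw [← hdP]; ring
  rw [hp00, hp11, hp01, hp10] at h5
  have h6 : c 0 1 * c 0 1 * (D / c 0 1) = c 0 1 * D := by
    field_simp
  have h7 : D * D = c 0 1 * D := by linear_combination h5 + h6
  have hDc : D = c 0 1 := mul_right_cancel₀ hD h7
  -- conclude
  have hP00 : P 0 0 = -1 := by
    apply mul_left_cancel₀ hb0; rw [hp00, hDc]; ring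
  have hP11 : P 1 1 = -1 := by
    apply mul_left_cancel₀ hb0; rw [hp11, hDc]; ring
  have hP01 : P 0 1 = 0 := by
    apply mul_left_cancel₀ hb0; rw [hp01]; ring
  have hP10 : P 1 0 = 0 := by
    apply mul_left_cancel₀ hb0; rw [hp10]; ring
  ext r s
  fin_cases r <;> fin_cases s <;>
    simp [hP00, hP01, hP10, hP11, Matrix.one_apply]
end
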